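/- Verification of the commutator assumption for the periodic finite-difference discretization: in the finite-difference setting, there exist constants C1, C2 > 0 depending only on the suprema over [0,1] of |V'|, |V''|, |V'''|, |V''''| (and in particular independent of n) such that for every n ≥ 3 and every v ∈ ℂⁿ: ‖[H1,H2]v‖ ≤ C1(‖D1 v‖ + ‖v‖) and ‖[H1,[H1,H2]]v‖ ≤ C2(‖H1 v‖ + ‖v‖), where ‖·‖ is the Euclidean 2-norm on ℂⁿ. Moreover H1 = D1†·D1, so H1 is positive semidefinite. -/

import Mathlib

open Matrix

noncomputable section

/-- Square `n × n` complex matrices. -/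
abbrev Mat (n : ℕ) := Matrix (Fin n) (Fin n) ℂ

/-- The commutator `[A,B] = AB - BA`. -/
def matComm {n : ℕ} (A B : Mat n) : Mat n := A * B - B * A

/-- The Euclidean 2-norm of a vector in `ℂⁿ`. -/
noncomputable def evnorm {n : ℕ} (v : Fin n → ℂ) : ℝ :=
  ‖(WithLp.equiv 2 (Fin n → ℂ)).symm v‖

/-- The `n×n` periodic central finite-difference discretization of `-Δ` on `[0,1]`:
`(H1)_{kk} = 2n²`, `(H1)_{k,k+1 mod n} = (H1)_{k,k-1 mod n} = -n²`, all other entries `0`. -/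
noncomputable def fdH1 (n : ℕ) : Mat n :=
  Matrix.of fun k l : Fin n =>
    if (l : ℕ) = (k : ℕ) then 2 * (n : ℂ)^2
    else if (l : ℕ) = ((k : ℕ) + 1) % n ∨ (l : ℕ) = ((k : ℕ) + n - 1) % n then -(n : ℂ)^2
    else 0

/-- The diagonal potential matrix `H2 = diag(V(0), V(1/n), …, V((n-1)/n))`. -/
noncomputable def fdH2 (n : ℕ) (V : ℝ → ℝ) : Mat n :=
  Matrix.diagonal fun k : Fin n => ((V (((k : ℕ) : ℝ) / (n : ℝ))) : ℂ)

/-- The difference matrix: `(D1)_{kk} = -n`, `(D1)_{k,k-1 mod n} = n`, all other entries `0`. -/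
noncomputable def fdD1 (n : ℕ) : Mat n :=
  Matrix.of fun k l : Fin n =>
    if (l : ℕ) = (k : ℕ) then -(n : ℂ)
    else if (l : ℕ) = ((k : ℕ) + n - 1) % n then (n : ℂ)
    else 0

open Function

def dfo (h : ℝ) (f : ℝ → ℝ) : ℝ → ℝ := fun x => f (x + h) - f x

lemma dfo_diff {h : ℝ} {f : ℝ → ℝ} (hf : Differentiable ℝ f) :
    Differentiable ℝ (dfo h f) :=
  (hf.comp (differentiable_id.add_const h)).sub hf

lemma deriv_dfo {h : ℝ} {f : ℝ → ℝ} (hf : Differentiable ℝ f) :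
    deriv (dfo h f) = dfo h (deriv f) := by
  funext x
  have h2 : DifferentiableAt ℝ (fun y => f (y + h)) x :=
    (hf (x + h)).comp x (differentiableAt_id.add_const h)
  have : deriv (fun y => f (y + h) - f y) x
      = deriv (fun y => f (y + h)) x - deriv f x := deriv_sub h2 (hf x)
  rw [show dfo h f = fun y => f (y + h) - f y from rfl]
  simpa [dfo, deriv_comp_add_const] using this

lemma abs_sub_le_of_deriv_le {f : ℝ → ℝ} {M : ℝ} (hf : Differentiable ℝ f)
    (hM : ∀ x, |deriv f x| ≤ M) (x y : ℝ) : |f y - f x| ≤ M * |y - x| := by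
  have := Convex.norm_image_sub_le_of_norm_deriv_le (s := Set.univ)
    (fun a _ => (hf a)) (fun a _ => by simpa using hM a) convex_univ (Set.mem_univ x) (Set.mem_univ y)
  simpa using this

lemma abs_dfo_le {h : ℝ} (hh : 0 ≤ h) {f : ℝ → ℝ} {M : ℝ} (hf : Differentiable ℝ f)
    (hM : ∀ x, |deriv f x| ≤ M) (x : ℝ) : |dfo h f x| ≤ M * h := by
  have := abs_sub_le_of_deriv_le hf hM x (x + h)
  simpa [dfo, abs_of_nonneg hh] using this

lemma periodic_deriv' {f : ℝ → ℝ} (hp : Periodic f 1) : Periodic (deriv f) 1 := by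
  intro x
  have h1 : deriv (fun y => f (y + 1)) x = deriv f x := by
    congr 1; funext y; exact hp y
  rw [deriv_comp_add_const] at h1
  exact h1

lemma periodic_iteratedDeriv {f : ℝ → ℝ} (hp : Periodic f 1) (j : ℕ) :
    Periodic (iteratedDeriv j f) 1 := by
  induction j with
  | zero => simpa using hp
  | succ j ih => rw [iteratedDeriv_succ]; exact periodic_deriv' ih

lemma periodic_global_bound {f : ℝ → ℝ} {B : ℝ} (hp : Periodic f 1)
    (hb : ∀ x ∈ Set.Icc (0:ℝ) 1, |f x| ≤ B) (x : ℝ) : |f x| ≤ B := by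
  have h1 : f (x - (⌊x⌋ : ℝ) * 1) = f x := hp.sub_int_mul_eq ⌊x⌋
  rw [mul_one] at h1
  rw [← h1]
  have hfr : x - (⌊x⌋ : ℝ) = Int.fract x := rfl
  rw [hfr]
  exact hb _ ⟨Int.fract_nonneg x, (Int.fract_lt_one x).le⟩

lemma contDiff_dfo {h : ℝ} {f : ℝ → ℝ} {m : WithTop ℕ∞} (hf : ContDiff ℝ m f) :
    ContDiff ℝ m (dfo h f) :=
  (hf.comp (contDiff_id.add contDiff_const)).sub hf

lemma iteratedDeriv_dfo {h : ℝ} : ∀ (j : ℕ) (f : ℝ → ℝ), ContDiff ℝ (j : ℕ) f →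
    iteratedDeriv j (dfo h f) = dfo h (iteratedDeriv j f) := by
  intro j
  induction j with
  | zero => intro f _; simp [iteratedDeriv_zero]
  | succ j ih =>
    intro f hf
    have hdiff : Differentiable ℝ (iteratedDeriv j f) :=
      hf.differentiable_iteratedDeriv j (by exact_mod_cast Nat.lt_succ_self j)
    rw [iteratedDeriv_succ, ih f (hf.of_le (by exact_mod_cast Nat.le_succ j)),
      deriv_dfo hdiff, ← iteratedDeriv_succ]

lemma iter_dfo_bound {h : ℝ} (hh : 0 ≤ h) : ∀ (j : ℕ) (f : ℝ → ℝ) (M : ℝ),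
    ContDiff ℝ (j : ℕ) f → (∀ x, |iteratedDeriv j f x| ≤ M) →
    ∀ x, |(dfo h)^[j] f x| ≤ M * h ^ j := by
  intro j
  induction j with
  | zero => intro f M _ hb x; simpa using hb x
  | succ j ih =>
    intro f M hf hb x
    rw [Function.iterate_succ_apply]
    have hCj : ContDiff ℝ (j : ℕ) f := hf.of_le (by exact_mod_cast Nat.le_succ j)
    have hdiff : Differentiable ℝ (iteratedDeriv j f) :=
      hf.differentiable_iteratedDeriv j (by exact_mod_cast Nat.lt_succ_self j)
    have hbd : ∀ x, |iteratedDeriv j (dfo h f) x| ≤ M * h := by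
      intro x
      rw [iteratedDeriv_dfo j f hCj]
      exact abs_dfo_le hh hdiff (fun y => by rw [← iteratedDeriv_succ]; exact hb y) x
    have := ih (dfo h f) (M * h) (contDiff_dfo hCj) hbd x
    calc |(dfo h)^[j] (dfo h f) x| ≤ M * h * h ^ j := this
    _ = M * h ^ (j+1) := by ring

/-- Master analytic lemma: bounds on first/second/third/fourth differences at grid points. -/
lemma grid_bounds {V : ℝ → ℝ} {B : ℝ} (hper : Function.Periodic V 1) (hC : ContDiff ℝ 4 V)
    (hb : ∀ j ∈ Finset.Icc 1 4, ∀ x ∈ Set.Icc (0:ℝ) 1, |iteratedDeriv j V x| ≤ B)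
    {n : ℕ} (hn : 3 ≤ n) :
    (∀ m : ℤ, |V (((m:ℝ)+1)/n) - V ((m:ℝ)/n)| ≤ B / n) ∧
    (∀ m : ℤ, |(V (((m:ℝ)+1)/n) - 2*V ((m:ℝ)/n) + V (((m:ℝ)-1)/n))| ≤ B / n^2) ∧
    (∀ m : ℤ, |(V (((m:ℝ)+2)/n) - 2*V (((m:ℝ)+1)/n) + V ((m:ℝ)/n))
              - (V ((m:ℝ)/n) - 2*V (((m:ℝ)-1)/n) + V (((m:ℝ)-2)/n))| ≤ 2*B / n^3) ∧
    (∀ m : ℤ, |(V (((m:ℝ)+2)/n) - 2*V (((m:ℝ)+1)/n) + V ((m:ℝ)/n))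
              - 2*(V (((m:ℝ)+1)/n) - 2*V ((m:ℝ)/n) + V (((m:ℝ)-1)/n))
              + (V ((m:ℝ)/n) - 2*V (((m:ℝ)-1)/n) + V (((m:ℝ)-2)/n))| ≤ B / n^4) := by
  have hn0 : (0:ℝ) < n := by positivity
  set h : ℝ := (n:ℝ)⁻¹ with hh_def
  have hh : 0 ≤ h := by positivity
  -- global bounds on derivatives
  have g : ∀ j ∈ Finset.Icc 1 4, ∀ x : ℝ, |iteratedDeriv j V x| ≤ B := fun j hj x =>
    periodic_global_bound (periodic_iteratedDeriv hper j) (hb j hj) x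
  have g1 := g 1 (by decide)
  have g2 := g 2 (by decide)
  have g3 := g 3 (by decide)
  have g4 := g 4 (by decide)
  -- iterated difference bounds
  have b1 : ∀ x, |dfo h V x| ≤ B * h := by
    have := iter_dfo_bound hh 1 V B (hC.of_le (by exact_mod_cast (by norm_num : (1:ℕ) ≤ 4))) g1
    simpa using this
  have b2 : ∀ x, |dfo h (dfo h V) x| ≤ B * h^2 := by
    have := iter_dfo_bound hh 2 V B (hC.of_le (by exact_mod_cast (by norm_num : (2:ℕ) ≤ 4))) g2
    simpa [Function.iterate_succ_apply', pow_two] using this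
  have b4 : ∀ x, |dfo h (dfo h (dfo h (dfo h V))) x| ≤ B * h^4 := by
    have := iter_dfo_bound hh 4 V B (by exact_mod_cast hC) g4
    simpa [Function.iterate_succ_apply'] using this
  -- Lipschitz bound for the second difference
  have hdV : Differentiable ℝ V := hC.differentiable (by norm_num)
  have hCd : ContDiff ℝ (2:ℕ) (deriv V) := by
    have h4 : ContDiff ℝ ((3:ℕ) + 1 : ℕ) V := by exact_mod_cast hC
    have := (contDiff_succ_iff_deriv (n := 3)).mp (by exact_mod_cast hC)
    exact this.2.2.of_le (by exact_mod_cast (by norm_num : (2:ℕ) ≤ 3))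
  have gd2 : ∀ x, |iteratedDeriv 2 (deriv V) x| ≤ B := by
    intro x
    rw [← iteratedDeriv_succ']
    exact g3 x
  have bd2 : ∀ x, |dfo h (dfo h (deriv V)) x| ≤ B * h^2 := by
    have := iter_dfo_bound hh 2 (deriv V) B hCd gd2
    simpa [Function.iterate_succ_apply', pow_two] using this
  have b3 : ∀ x y, |dfo h (dfo h V) y - dfo h (dfo h V) x| ≤ B * h^2 * |y - x| := by
    have hder : deriv (dfo h (dfo h V)) = dfo h (dfo h (deriv V)) := by
      rw [deriv_dfo (dfo_diff hdV), deriv_dfo hdV]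
    exact abs_sub_le_of_deriv_le (dfo_diff (dfo_diff hdV))
      (fun x => by rw [hder]; exact bd2 x)
  -- translate to grid points
  have key2 : ∀ m : ℤ, dfo h (dfo h V) (((m:ℝ)-1)/n)
      = V (((m:ℝ)+1)/n) - 2*V ((m:ℝ)/n) + V (((m:ℝ)-1)/n) := by
    intro m
    simp only [dfo]
    rw [show ((m:ℝ)-1)/n + h + h = ((m:ℝ)+1)/n by rw [hh_def]; field_simp; try ring,
        show ((m:ℝ)-1)/n + h = ((m:ℝ))/n by rw [hh_def]; field_simp; try ring]
    ring
  refine ⟨?_, ?_, ?_, ?_⟩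
  · intro m
    have := b1 ((m:ℝ)/n)
    simp only [dfo] at this
    rw [show (m:ℝ)/n + h = ((m:ℝ)+1)/n by rw [hh_def]; field_simp; try ring] at this
    calc |V (((m:ℝ)+1)/n) - V ((m:ℝ)/n)| ≤ B * h := this
    _ = B / n := by rw [hh_def]; ring
  · intro m
    have := b2 (((m:ℝ)-1)/n)
    rw [key2 m] at this
    calc _ ≤ B * h^2 := this
    _ = B / n^2 := by rw [hh_def]; field_simp; try ring
  · intro m
    have this2 := b3 (((m:ℝ)-2)/n) (((m:ℝ))/n)
    have e1 := key2 (m+1)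
    have e2 := key2 (m-1)
    push_cast at e1 e2
    rw [show ((m:ℝ)+1-1)/n = (m:ℝ)/n by ring_nf,
        show ((m:ℝ)+1+1) = ((m:ℝ)+2) by ring] at e1
    rw [show ((m:ℝ)-1-1)/n = ((m:ℝ)-2)/n by ring_nf,
        show ((m:ℝ)-1+1) = (m:ℝ) by ring] at e2
    rw [e1, e2] at this2
    have ed : |((m:ℝ))/n - ((m:ℝ)-2)/n| = 2/n := by
      rw [show ((m:ℝ))/n - ((m:ℝ)-2)/n = 2/n by field_simp; try ring]
      rw [abs_of_nonneg (by positivity)]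
    rw [ed] at this2
    calc _ ≤ B * h^2 * (2/n) := this2
    _ = 2*B / n^3 := by rw [hh_def]; field_simp; try ring
  · intro m
    have sd : ∀ (f : ℝ → ℝ) (x : ℝ), dfo h (dfo h f) x = f (x+h+h) - 2*f (x+h) + f x := by
      intro f x; simp only [dfo]; ring
    have this2 := b4 (((m:ℝ)-2)/n)
    rw [sd (dfo h (dfo h V)) (((m:ℝ)-2)/n),
        show ((m:ℝ)-2)/n + h + h = ((m:ℝ))/n by rw [hh_def]; field_simp; try ring,
        show ((m:ℝ)-2)/n + h = ((m:ℝ)-1)/n by rw [hh_def]; field_simp; try ring] at this2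
    have e0 := key2 m
    have e1 := key2 (m+1)
    have e2 := key2 (m-1)
    push_cast at e1 e2
    rw [show ((m:ℝ)+1-1)/n = (m:ℝ)/n by ring_nf,
        show ((m:ℝ)+1+1) = ((m:ℝ)+2) by ring] at e1
    rw [show ((m:ℝ)-1-1)/n = ((m:ℝ)-2)/n by ring_nf,
        show ((m:ℝ)-1+1) = (m:ℝ) by ring] at e2
    rw [show ((m:ℝ))/n = ((m:ℝ)-1+1)/n by ring_nf] at e1
    rw [show ((m:ℝ)-1+1)/n = ((m:ℝ))/n by ring_nf] at e1
    rw [e1, e0, e2] at this2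
    calc _ ≤ B * h^4 := this2
    _ = B / n^4 := by rw [hh_def]; field_simp; try ring


section FinLemmas
variable {n : ℕ} [NeZero n] (hn : 3 ≤ n)
include hn

lemma fd_val_one : ((1 : Fin n) : ℕ) = 1 := by
  rw [Fin.val_one']; exact Nat.mod_eq_of_lt (by omega)

lemma val_add_one (k : Fin n) : ((k + 1 : Fin n) : ℕ) = ((k : ℕ) + 1) % n := by
  rw [Fin.add_def, fd_val_one hn]

lemma val_sub_one (k : Fin n) : ((k - 1 : Fin n) : ℕ) = ((k : ℕ) + n - 1) % n := by
  rw [Fin.sub_def, fd_val_one hn]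
  show ((n - 1 + (k:ℕ)) % n) = _
  congr 1
  omega

lemma fd_one_ne_zero : (1 : Fin n) ≠ 0 := by
  intro h
  have := congrArg Fin.val h
  rw [fd_val_one hn, Fin.val_zero] at this
  omega

lemma fd_two_ne_zero : (1 + 1 : Fin n) ≠ 0 := by
  intro h
  have := congrArg Fin.val h
  rw [Fin.add_def] at this
  have this2 : (((1:Fin n):ℕ) + ((1:Fin n):ℕ)) % n = 0 := this
  rw [fd_val_one hn, Nat.mod_eq_of_lt (by omega)] at this2
  omega

lemma add_one_ne (k : Fin n) : k + 1 ≠ k := by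
  intro h
  have h2 := congrArg (fun x => x - k) h
  simp at h2
  omega

lemma sub_one_ne (k : Fin n) : k - 1 ≠ k := by
  intro h
  have h2 := congrArg (fun x => x - k) h
  simp [sub_sub_cancel_left] at h2
  omega

lemma add_one_ne_sub_one (k : Fin n) : k + 1 ≠ k - 1 := by
  intro h
  have h2 : (k + 1) - (k - 1) = 0 := sub_eq_zero.mpr h
  have h3 : (k + 1) - (k - 1) = 1 + 1 := by abel
  exact fd_two_ne_zero hn (h3 ▸ h2)

end FinLemmas

section MatLemmas
variable {n : ℕ} [NeZero n] (hn : 3 ≤ n)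
include hn

lemma fdD1_apply (k l : Fin n) :
    fdD1 n k l = if l = k then -(n:ℂ) else if l = k - 1 then (n:ℂ) else 0 := by
  show (if (l : ℕ) = (k : ℕ) then -(n : ℂ)
    else if (l:ℕ) = ((k:ℕ) + n - 1) % n then (n:ℂ) else 0) = _
  rw [← val_sub_one hn k]
  simp [Fin.val_inj]

lemma fdH1_apply (k l : Fin n) :
    fdH1 n k l = if l = k then 2*(n:ℂ)^2 else if l = k + 1 ∨ l = k - 1 then -(n:ℂ)^2 else 0 := by
  show (if (l : ℕ) = (k : ℕ) then 2*(n : ℂ)^2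
    else if (l:ℕ) = ((k:ℕ) + 1) % n ∨ (l:ℕ) = ((k:ℕ) + n - 1) % n then -(n:ℂ)^2 else 0) = _
  rw [← val_sub_one hn k, ← val_add_one hn k]
  simp [Fin.val_inj]

lemma mulVec_fdD1 (v : Fin n → ℂ) (k : Fin n) :
    (fdD1 n).mulVec v k = n * v (k-1) - n * v k := by
  simp only [Matrix.mulVec, dotProduct]
  rw [Finset.sum_congr rfl (fun l _ => by rw [fdD1_apply hn k l])]
  have key : ∀ l, (if l = k then -(n:ℂ) else if l = k-1 then (n:ℂ) else 0) * v l
      = (if l = k then -(n:ℂ) * v l else 0) + (if l = k-1 then (n:ℂ) * v l else 0) := by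
    intro l
    by_cases h1 : l = k
    · rw [if_pos h1, if_pos h1, if_neg (fun h : l = k - 1 => sub_one_ne hn k (by rw [h1] at h; exact h.symm))]
      ring
    · rw [if_neg h1, if_neg h1]
      by_cases h2 : l = k - 1
      · rw [if_pos h2, if_pos h2]; ring
      · rw [if_neg h2, if_neg h2]; ring
  rw [Finset.sum_congr rfl (fun l _ => key l), Finset.sum_add_distrib,
    Finset.sum_ite_eq', Finset.sum_ite_eq']
  simp only [Finset.mem_univ, if_pos]
  ring

lemma mulVec_fdH1 (v : Fin n → ℂ) (k : Fin n) :
    (fdH1 n).mulVec v k = 2*(n:ℂ)^2 * v k - (n:ℂ)^2 * v (k+1) - (n:ℂ)^2 * v (k-1) := by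
  simp only [Matrix.mulVec, dotProduct]
  rw [Finset.sum_congr rfl (fun l _ => by rw [fdH1_apply hn k l])]
  have key : ∀ l, (if l = k then 2*(n:ℂ)^2 else if l = k + 1 ∨ l = k - 1 then -(n:ℂ)^2 else 0) * v l
      = (if l = k then 2*(n:ℂ)^2 * v l else 0) + (if l = k+1 then -(n:ℂ)^2 * v l else 0)
        + (if l = k-1 then -(n:ℂ)^2 * v l else 0) := by
    intro l
    by_cases h1 : l = k
    · rw [if_pos h1, if_pos h1,
        if_neg (fun h : l = k + 1 => add_one_ne hn k (by rw [h1] at h; exact h.symm)),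
        if_neg (fun h : l = k - 1 => sub_one_ne hn k (by rw [h1] at h; exact h.symm))]
      ring
    · rw [if_neg h1, if_neg h1]
      by_cases h2 : l = k + 1
      · rw [if_pos (Or.inl h2), if_pos h2,
          if_neg (fun h : l = k - 1 => add_one_ne_sub_one hn k (by rw [h2] at h; exact h))]
        ring
      · rw [if_neg h2]
        by_cases h3 : l = k - 1
        · rw [if_pos (Or.inr h3), if_pos h3]; ring
        · rw [if_neg (by tauto), if_neg h3]; ring
  rw [Finset.sum_congr rfl (fun l _ => key l), Finset.sum_add_distrib, Finset.sum_add_distrib,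
    Finset.sum_ite_eq', Finset.sum_ite_eq', Finset.sum_ite_eq']
  simp only [Finset.mem_univ, if_pos]
  ring

lemma mulVec_fdH2 (V : ℝ → ℝ) (v : Fin n → ℂ) (k : Fin n) :
    (fdH2 n V).mulVec v k = (V (((k:ℕ):ℝ)/n) : ℂ) * v k := by
  simp [fdH2, Matrix.mulVec_diagonal]

lemma fdH1_eq_conjTranspose_mul : fdH1 n = (fdD1 n)ᴴ * fdD1 n := by
  ext k l
  rw [Matrix.mul_apply, fdH1_apply hn k l]
  have key : ∀ m : Fin n, (fdD1 n)ᴴ k m * fdD1 n m l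
      = (if m = k then (-(n:ℂ)) * fdD1 n m l else 0)
        + (if m = k+1 then (n:ℂ) * fdD1 n m l else 0) := by
    intro m
    rw [Matrix.conjTranspose_apply, fdD1_apply hn m k]
    by_cases h1 : k = m
    · rw [if_pos h1, if_pos h1.symm,
        if_neg (fun h : m = k + 1 => add_one_ne hn k (by rw [← h1] at h; exact h.symm))]
      simp
    · rw [if_neg h1]
      by_cases h2 : k = m - 1
      · have hm : m = k + 1 := by rw [h2]; rw [sub_add_cancel]
        rw [if_pos h2, if_pos hm, if_neg (fun h : m = k => h1 (h.symm))]
        simp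
      · rw [if_neg h2, if_neg (fun h : m = k => h1 h.symm),
          if_neg (fun h : m = k + 1 => h2 (by rw [h]; rw [add_sub_cancel_right]))]
        simp
  rw [Finset.sum_congr rfl (fun m _ => key m), Finset.sum_add_distrib,
    Finset.sum_ite_eq', Finset.sum_ite_eq']
  simp only [Finset.mem_univ, if_pos]
  rw [fdD1_apply hn k l, fdD1_apply hn (k+1) l]
  rw [show (k + 1 - 1 : Fin n) = k from add_sub_cancel_right k 1]
  have d1 : k + 1 ≠ k := add_one_ne hn k
  have d2 : k - 1 ≠ k := sub_one_ne hn k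
  have d3 : k + 1 ≠ k - 1 := add_one_ne_sub_one hn k
  by_cases h1 : l = k
  · subst h1; simp [Ne.symm d1, Ne.symm d2]; ring
  · by_cases h2 : l = k + 1
    · subst h2; simp [d1, d3]; ring
    · by_cases h3 : l = k - 1
      · subst h3; simp [d2, Ne.symm d3, h1]; ring
      · simp [h1, h2, h3]

end MatLemmas

section EvNorm
open ComplexConjugate
variable {n : ℕ}

lemma evnorm_eq (v : Fin n → ℂ) : evnorm v = Real.sqrt (∑ k, ‖v k‖^2) := by
  rw [evnorm, EuclideanSpace.norm_eq]
  simp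

lemma evnorm_nonneg (v : Fin n → ℂ) : 0 ≤ evnorm v := norm_nonneg _

lemma evnorm_add_le (f g : Fin n → ℂ) : evnorm (fun k => f k + g k) ≤ evnorm f + evnorm g :=
  norm_add_le ((WithLp.equiv 2 (Fin n → ℂ)).symm f) ((WithLp.equiv 2 (Fin n → ℂ)).symm g)

lemma evnorm_smul_le {c : Fin n → ℝ} {M : ℝ} (hM : 0 ≤ M) (h : ∀ k, |c k| ≤ M)
    (v : Fin n → ℂ) : evnorm (fun k => (c k : ℂ) * v k) ≤ M * evnorm v := by
  rw [evnorm_eq, evnorm_eq]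
  have h1 : ∑ k, ‖(c k : ℂ) * v k‖^2 ≤ M^2 * ∑ k, ‖v k‖^2 := by
    rw [Finset.mul_sum]
    apply Finset.sum_le_sum
    intro k _
    rw [norm_mul, Complex.norm_real, Real.norm_eq_abs, mul_pow]
    have := h k
    have h2 : |c k|^2 ≤ M^2 := by nlinarith [abs_nonneg (c k)]
    nlinarith [sq_nonneg (‖v k‖), norm_nonneg (v k)]
  calc Real.sqrt (∑ k, ‖(c k : ℂ) * v k‖^2) ≤ Real.sqrt (M^2 * ∑ k, ‖v k‖^2) :=
        Real.sqrt_le_sqrt h1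
  _ = M * Real.sqrt (∑ k, ‖v k‖^2) := by
      rw [Real.sqrt_mul (sq_nonneg M), Real.sqrt_sq hM]

lemma evnorm_shift (v : Fin n → ℂ) (c : Fin n) [NeZero n] :
    evnorm (fun k => v (k + c)) = evnorm v := by
  rw [evnorm_eq, evnorm_eq]
  congr 1
  exact Fintype.sum_equiv (Equiv.addRight c) _ _ (fun k => rfl)

lemma evnorm_D1_le {n : ℕ} [NeZero n] (hn : 3 ≤ n) (v : Fin n → ℂ) :
    evnorm ((fdD1 n).mulVec v) ≤ (evnorm ((fdH1 n).mulVec v) + evnorm v) / 2 := by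
  set x : EuclideanSpace ℂ (Fin n) := (WithLp.equiv 2 (Fin n → ℂ)).symm v with hx
  set y : EuclideanSpace ℂ (Fin n) := (WithLp.equiv 2 (Fin n → ℂ)).symm ((fdH1 n).mulVec v) with hy
  set w : EuclideanSpace ℂ (Fin n) := (WithLp.equiv 2 (Fin n → ℂ)).symm ((fdD1 n).mulVec v) with hw
  have hinner : inner ℂ w w = inner ℂ x y := by
    rw [PiLp.inner_apply, PiLp.inner_apply]
    have expand1 : ∀ k : Fin n, inner ℂ (w k) (w k)
        = (n:ℂ)^2*(conj (v (k-1)) * v (k-1)) + (n:ℂ)^2*(conj (v k) * v k)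
          - (n:ℂ)^2*(conj (v (k-1)) * v k) - (n:ℂ)^2*(v (k-1) * conj (v k)) := by
      intro k
      have : w k = (fdD1 n).mulVec v k := rfl
      rw [RCLike.inner_apply, this, mulVec_fdD1 hn]
      simp only [map_sub, _root_.map_mul]
      simp only [Complex.conj_natCast]
      ring
    have expand2 : ∀ k : Fin n, inner ℂ (x k) (y k)
        = 2*(n:ℂ)^2*(conj (v k) * v k) - (n:ℂ)^2*(conj (v k) * v (k+1))
          - (n:ℂ)^2*(conj (v k) * v (k-1)) := by
      intro k
      have hxk : x k = v k := rfl
      have hyk : y k = (fdH1 n).mulVec v k := rfl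
      rw [RCLike.inner_apply, hxk, hyk, mulVec_fdH1 hn]
      ring
    rw [Finset.sum_congr rfl (fun k _ => expand1 k), Finset.sum_congr rfl (fun k _ => expand2 k)]
    have r1 : ∑ k : Fin n, conj (v (k-1)) * v (k-1) = ∑ k : Fin n, conj (v k) * v k :=
      Fintype.sum_equiv (Equiv.subRight 1) _ _ (fun k => rfl)
    have r2 : ∑ k : Fin n, conj (v k) * v (k+1) = ∑ k : Fin n, conj (v (k-1)) * v k :=
      Fintype.sum_equiv (Equiv.addRight 1) _ _ (fun k => by simp [Equiv.coe_addRight, add_sub_cancel_right])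
    have r3 : ∑ k : Fin n, v (k-1) * conj (v k) = ∑ k : Fin n, conj (v k) * v (k-1) :=
      Finset.sum_congr rfl (fun k _ => mul_comm _ _)
    simp only [Finset.sum_sub_distrib, Finset.sum_add_distrib, ← Finset.mul_sum]
    rw [r1, r2, r3]
    ring
  have hsq : ‖w‖^2 ≤ ‖x‖ * ‖y‖ := by
    have h1 : (‖w‖:ℝ)^2 = RCLike.re (inner ℂ w w) := by
      rw [← inner_self_eq_norm_sq (𝕜 := ℂ)]
    rw [h1, hinner]
    calc RCLike.re (inner ℂ x y) ≤ ‖inner ℂ x y‖ := RCLike.re_le_norm _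
    _ ≤ ‖x‖ * ‖y‖ := norm_inner_le_norm x y
  have hxn : ‖x‖ = evnorm v := rfl
  have hyn : ‖y‖ = evnorm ((fdH1 n).mulVec v) := rfl
  have hwn : ‖w‖ = evnorm ((fdD1 n).mulVec v) := rfl
  rw [← hxn, ← hyn, ← hwn]
  nlinarith [norm_nonneg w, norm_nonneg x, norm_nonneg y, sq_nonneg (‖x‖ - ‖y‖),
    sq_nonneg (‖w‖ - (‖y‖ + ‖x‖)/2), sq_nonneg (‖w‖ + (‖y‖ + ‖x‖)/2)]

end EvNorm

section Grid

/-- Grid sample of `V`. -/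
def Qg (V : ℝ → ℝ) (n : ℕ) (m : ℤ) : ℝ := V ((m:ℝ)/n)
/-- Scaled first difference. -/
def ag (V : ℝ → ℝ) (n : ℕ) (m : ℤ) : ℝ := n * (Qg V n (m+1) - Qg V n m)
/-- Scaled second difference. -/
def bg (V : ℝ → ℝ) (n : ℕ) (m : ℤ) : ℝ :=
  n^2 * (Qg V n (m+1) - 2*Qg V n m + Qg V n (m-1))

variable {V : ℝ → ℝ} {n : ℕ}

lemma Qg_cast_arg (m : ℤ) : Qg V n m = V (((m:ℝ))/n) := rfl

lemma Qg_add_n (hper : Function.Periodic V 1) (hn : 3 ≤ n) (m : ℤ) :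
    Qg V n (m + n) = Qg V n m := by
  unfold Qg
  have hn0 : (n:ℝ) ≠ 0 := by positivity
  have harg : ((m + (n:ℤ) : ℤ):ℝ)/n = (m:ℝ)/n + 1 := by push_cast; field_simp
  rw [harg]
  exact hper _

lemma Qg_mod (hper : Function.Periodic V 1) (hn : 3 ≤ n) (m : ℤ) :
    Qg V n (m % n) = Qg V n m := by
  have hrepr : (m % (n:ℤ) : ℤ) = m - (n:ℤ) * (m / n) := Int.emod_def m n
  rw [hrepr]
  unfold Qg
  have hn0 : (n:ℝ) ≠ 0 := by positivity
  have harg : (((m - (n:ℤ) * (m / (n:ℤ)) :ℤ)):ℝ)/n = (m:ℝ)/n - ((m / (n:ℤ) : ℤ):ℝ) * 1 := by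
    push_cast; field_simp; try ring
  rw [harg]
  exact hper.sub_int_mul_eq (m / (n:ℤ))

lemma Qg_val_add (hper : Function.Periodic V 1) [NeZero n] (hn : 3 ≤ n) (k : Fin n) :
    Qg V n (((k+1 : Fin n):ℕ):ℤ) = Qg V n (((k:ℕ):ℤ) + 1) := by
  rw [val_add_one hn k, Int.natCast_mod]
  push_cast
  rw [Qg_mod hper hn]

lemma Qg_val_sub (hper : Function.Periodic V 1) [NeZero n] (hn : 3 ≤ n) (k : Fin n) :
    Qg V n (((k-1 : Fin n):ℕ):ℤ) = Qg V n (((k:ℕ):ℤ) - 1) := by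
  rw [val_sub_one hn k, Int.natCast_mod]
  have hcast : (((k:ℕ) + n - 1 : ℕ) : ℤ) = ((k:ℕ):ℤ) - 1 + n := by omega
  rw [hcast, Qg_mod hper hn, Qg_add_n hper hn]

end Grid

section GridMore
variable {V : ℝ → ℝ} {B : ℝ} {n : ℕ}

lemma Qg_sub_nmul (hper : Function.Periodic V 1) (hn : 3 ≤ n) (m q : ℤ) :
    Qg V n (m - n*q) = Qg V n m := by
  unfold Qg
  have hn0 : (n:ℝ) ≠ 0 := by positivity
  have harg : (((m - (n:ℤ)*q :ℤ)):ℝ)/n = (m:ℝ)/n - (q:ℝ) * 1 := by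
    push_cast; field_simp; try ring
  rw [harg]
  exact hper.sub_int_mul_eq q

lemma Qg_val_add_t (hper : Function.Periodic V 1) [NeZero n] (hn : 3 ≤ n) (k : Fin n) (t : ℤ) :
    Qg V n ((((k+1 : Fin n):ℕ):ℤ) + t) = Qg V n ((((k:ℕ):ℤ) + 1) + t) := by
  rw [val_add_one hn k, Int.natCast_mod]
  push_cast
  have : (((k:ℕ):ℤ) + 1) % n + t = ((((k:ℕ):ℤ) + 1) + t) - n * ((((k:ℕ):ℤ)+1) / n) := by
    rw [Int.emod_def]; ring
  rw [this, Qg_sub_nmul hper hn]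

lemma Qg_val_sub_t (hper : Function.Periodic V 1) [NeZero n] (hn : 3 ≤ n) (k : Fin n) (t : ℤ) :
    Qg V n ((((k-1 : Fin n):ℕ):ℤ) + t) = Qg V n ((((k:ℕ):ℤ) - 1) + t) := by
  rw [val_sub_one hn k, Int.natCast_mod]
  have hcast : (((k:ℕ) + n - 1 : ℕ) : ℤ) = ((k:ℕ):ℤ) - 1 + n := by omega
  rw [hcast]
  have : (((k:ℕ):ℤ) - 1 + n) % n + t = ((((k:ℕ):ℤ) - 1) + t) - n * (((((k:ℕ):ℤ) - 1 + n)) / n - 1) := by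
    rw [Int.emod_def]; ring
  rw [this, Qg_sub_nmul hper hn]

lemma coeff_bounds (hper : Function.Periodic V 1) (hC : ContDiff ℝ 4 V)
    (hb : ∀ j ∈ Finset.Icc 1 4, ∀ x ∈ Set.Icc (0:ℝ) 1, |iteratedDeriv j V x| ≤ B)
    (hn : 3 ≤ n) :
    (∀ m : ℤ, |ag V n m| ≤ B) ∧
    (∀ m : ℤ, |bg V n m| ≤ B) ∧
    (∀ m : ℤ, |2*(n:ℝ)*(bg V n (m-1) - bg V n (m+1))| ≤ 4*B) ∧
    (∀ m : ℤ, |(n:ℝ)^2*(bg V n (m+1) - 2*bg V n m + bg V n (m-1))| ≤ B) := by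
  obtain ⟨O1, O2, O3, O4⟩ := grid_bounds hper hC hb hn
  have hn0 : (0:ℝ) < n := by positivity
  refine ⟨?_, ?_, ?_, ?_⟩
  · intro m
    have heq : ag V n m = (n:ℝ) * (V (((m:ℝ)+1)/n) - V ((m:ℝ)/n)) := by
      unfold ag Qg; push_cast; ring
    rw [heq, abs_mul, abs_of_nonneg hn0.le]
    calc (n:ℝ) * |V (((m:ℝ)+1)/n) - V ((m:ℝ)/n)| ≤ (n:ℝ) * (B/n) :=
          mul_le_mul_of_nonneg_left (O1 m) hn0.le
    _ = B := by field_simp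
  · intro m
    have heq : bg V n m = (n:ℝ)^2 * (V (((m:ℝ)+1)/n) - 2*V ((m:ℝ)/n) + V (((m:ℝ)-1)/n)) := by
      unfold bg Qg; push_cast; ring
    rw [heq, abs_mul, abs_of_nonneg (by positivity : (0:ℝ) ≤ (n:ℝ)^2)]
    calc ((n:ℝ)^2) * |V (((m:ℝ)+1)/n) - 2*V ((m:ℝ)/n) + V (((m:ℝ)-1)/n)| ≤ (n:ℝ)^2 * (B/n^2) :=
          mul_le_mul_of_nonneg_left (O2 m) (by positivity)
    _ = B := by field_simp
  · intro m
    have heq : 2*(n:ℝ)*(bg V n (m-1) - bg V n (m+1))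
        = -(2*(n:ℝ)^3 * ((V (((m:ℝ)+2)/n) - 2*V (((m:ℝ)+1)/n) + V ((m:ℝ)/n))
            - (V ((m:ℝ)/n) - 2*V (((m:ℝ)-1)/n) + V (((m:ℝ)-2)/n)))) := by
      unfold bg Qg; push_cast; ring
    rw [heq, abs_neg, abs_mul, abs_of_nonneg (by positivity : (0:ℝ) ≤ 2*(n:ℝ)^3)]
    calc 2*(n:ℝ)^3 * |_| ≤ 2*(n:ℝ)^3 * (2*B/n^3) :=
          mul_le_mul_of_nonneg_left (O3 m) (by positivity)
    _ = 4*B := by field_simp; ring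
  · intro m
    have heq : (n:ℝ)^2*(bg V n (m+1) - 2*bg V n m + bg V n (m-1))
        = (n:ℝ)^4 * ((V (((m:ℝ)+2)/n) - 2*V (((m:ℝ)+1)/n) + V ((m:ℝ)/n))
            - 2*(V (((m:ℝ)+1)/n) - 2*V ((m:ℝ)/n) + V (((m:ℝ)-1)/n))
            + (V ((m:ℝ)/n) - 2*V (((m:ℝ)-1)/n) + V (((m:ℝ)-2)/n))) := by
      unfold bg Qg; push_cast; ring
    rw [heq, abs_mul, abs_of_nonneg (by positivity : (0:ℝ) ≤ (n:ℝ)^4)]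
    calc (n:ℝ)^4 * |_| ≤ (n:ℝ)^4 * (B/n^4) :=
          mul_le_mul_of_nonneg_left (O4 m) (by positivity)
    _ = B := by field_simp

lemma evnorm_shift_sub {n : ℕ} [NeZero n] (v : Fin n → ℂ) (c : Fin n) :
    evnorm (fun k => v (k - c)) = evnorm v := by
  rw [evnorm_eq, evnorm_eq]
  congr 1
  exact Fintype.sum_equiv (Equiv.subRight c) _ _ (fun k => rfl)

end GridMore

section GridMore2
variable {V : ℝ → ℝ} {n : ℕ}

lemma Qg_val_add_s (hper : Function.Periodic V 1) [NeZero n] (hn : 3 ≤ n) (k : Fin n) (t : ℤ) :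
    Qg V n ((((k+1 : Fin n):ℕ):ℤ) - t) = Qg V n ((((k:ℕ):ℤ) + 1) - t) := by
  rw [show ((((k+1 : Fin n):ℕ):ℤ) - t) = ((((k+1 : Fin n):ℕ):ℤ) + (-t)) from sub_eq_add_neg _ _,
    Qg_val_add_t hper hn k (-t), ← sub_eq_add_neg]

lemma Qg_val_sub_s (hper : Function.Periodic V 1) [NeZero n] (hn : 3 ≤ n) (k : Fin n) (t : ℤ) :
    Qg V n ((((k-1 : Fin n):ℕ):ℤ) - t) = Qg V n ((((k:ℕ):ℤ) - 1) - t) := by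
  rw [show ((((k-1 : Fin n):ℕ):ℤ) - t) = ((((k-1 : Fin n):ℕ):ℤ) + (-t)) from sub_eq_add_neg _ _,
    Qg_val_sub_t hper hn k (-t), ← sub_eq_add_neg]


lemma Qg_congr (hper : Function.Periodic V 1) (hn : 3 ≤ n) {m m' : ℤ}
    (h : m % n = m' % n) : Qg V n m = Qg V n m' := by
  rw [← Qg_mod hper hn m, h, Qg_mod hper hn]

lemma ag_congr (hper : Function.Periodic V 1) (hn : 3 ≤ n) {m m' : ℤ}
    (h : m % n = m' % n) : ag V n m = ag V n m' := by
  unfold ag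
  rw [Qg_congr hper hn (show (m+1) % (n:ℤ) = (m'+1) % (n:ℤ) by
      rw [Int.add_emod, h, ← Int.add_emod]),
    Qg_congr hper hn h]

lemma bg_congr (hper : Function.Periodic V 1) (hn : 3 ≤ n) {m m' : ℤ}
    (h : m % n = m' % n) : bg V n m = bg V n m' := by
  unfold bg
  rw [Qg_congr hper hn (show (m+1) % (n:ℤ) = (m'+1) % (n:ℤ) by
      rw [Int.add_emod, h, ← Int.add_emod]),
    Qg_congr hper hn (show (m-1) % (n:ℤ) = (m'-1) % (n:ℤ) by
      rw [Int.sub_emod, h, ← Int.sub_emod]),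
    Qg_congr hper hn h]

lemma val_emod_add [NeZero n] (hn : 3 ≤ n) (k : Fin n) :
    ((((k+1:Fin n):ℕ):ℤ)) % n = (((k:ℕ):ℤ) + 1) % n := by
  rw [val_add_one hn k, Int.natCast_mod]
  push_cast
  rw [Int.emod_emod_of_dvd _ dvd_rfl]

lemma val_emod_sub [NeZero n] (hn : 3 ≤ n) (k : Fin n) :
    ((((k-1:Fin n):ℕ):ℤ)) % n = (((k:ℕ):ℤ) - 1) % n := by
  rw [val_sub_one hn k, Int.natCast_mod]
  have hcast : (((k:ℕ) + n - 1 : ℕ) : ℤ) = ((k:ℕ):ℤ) - 1 + n := by omega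
  rw [hcast, Int.emod_emod_of_dvd _ dvd_rfl,
    show ((k:ℕ):ℤ) - 1 + (n:ℤ) = ((k:ℕ):ℤ) - 1 + (n:ℤ)*1 by ring, Int.add_mul_emod_self_left]

lemma ag_val_add (hper : Function.Periodic V 1) [NeZero n] (hn : 3 ≤ n) (k : Fin n) :
    ag V n (((k+1:Fin n):ℕ):ℤ) = ag V n (((k:ℕ):ℤ) + 1) :=
  ag_congr hper hn (val_emod_add hn k)

lemma ag_val_sub (hper : Function.Periodic V 1) [NeZero n] (hn : 3 ≤ n) (k : Fin n) :
    ag V n (((k-1:Fin n):ℕ):ℤ) = ag V n (((k:ℕ):ℤ) - 1) :=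
  ag_congr hper hn (val_emod_sub hn k)

lemma ag_val_add_pred (hper : Function.Periodic V 1) [NeZero n] (hn : 3 ≤ n) (k : Fin n) :
    ag V n ((((k+1:Fin n):ℕ):ℤ) - 1) = ag V n ((((k:ℕ):ℤ) + 1) - 1) :=
  ag_congr hper hn (by rw [Int.sub_emod, val_emod_add hn k, ← Int.sub_emod])

lemma ag_val_sub_pred (hper : Function.Periodic V 1) [NeZero n] (hn : 3 ≤ n) (k : Fin n) :
    ag V n ((((k-1:Fin n):ℕ):ℤ) - 1) = ag V n ((((k:ℕ):ℤ) - 1) - 1) :=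
  ag_congr hper hn (by rw [Int.sub_emod, val_emod_sub hn k, ← Int.sub_emod])

lemma bg_val_add (hper : Function.Periodic V 1) [NeZero n] (hn : 3 ≤ n) (k : Fin n) :
    bg V n (((k+1:Fin n):ℕ):ℤ) = bg V n (((k:ℕ):ℤ) + 1) :=
  bg_congr hper hn (val_emod_add hn k)

lemma bg_val_sub (hper : Function.Periodic V 1) [NeZero n] (hn : 3 ≤ n) (k : Fin n) :
    bg V n (((k-1:Fin n):ℕ):ℤ) = bg V n (((k:ℕ):ℤ) - 1) :=
  bg_congr hper hn (val_emod_sub hn k)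

end GridMore2

section Tri
variable {n : ℕ}

lemma evnorm_add3_le (f g h : Fin n → ℂ) :
    evnorm (fun k => f k + g k + h k) ≤ evnorm f + evnorm g + evnorm h := by
  calc evnorm (fun k => (f k + g k) + h k)
      ≤ evnorm (fun k => f k + g k) + evnorm h := evnorm_add_le _ _
  _ ≤ evnorm f + evnorm g + evnorm h := add_le_add_left (evnorm_add_le f g) _

lemma evnorm_add5_le (f g h p q : Fin n → ℂ) :
    evnorm (fun k => f k + g k + h k + p k + q k)
      ≤ evnorm f + evnorm g + evnorm h + evnorm p + evnorm q := by
  calc evnorm (fun k => (f k + g k + h k + p k) + q k)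
      ≤ evnorm (fun k => f k + g k + h k + p k) + evnorm q := evnorm_add_le _ _
  _ ≤ (evnorm (fun k => f k + g k + h k) + evnorm p) + evnorm q := by
      exact add_le_add_left (evnorm_add_le _ _) _
  _ ≤ evnorm f + evnorm g + evnorm h + evnorm p + evnorm q := by
      have := evnorm_add3_le f g h
      linarith

end Tri


/-- **Verification of the commutator assumption for the periodic finite-difference
discretization.** There are constants `C1, C2 > 0` depending only on a bound `B` for the
suprema over `[0,1]` of `|V'|, |V''|, |V'''|, |V''''|` (in particular independent of `n`)
such that for all `n ≥ 3` and `v ∈ ℂⁿ` the commutator bounds hold; moreover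
`H1 = D1† D1`, so `H1` is positive semidefinite. -/
theorem finite_difference_commutator_assumption (B : ℝ) (hB : 0 ≤ B) :
    ∃ C1 : ℝ, 0 < C1 ∧ ∃ C2 : ℝ, 0 < C2 ∧
      ∀ (V : ℝ → ℝ), Function.Periodic V 1 → ContDiff ℝ 4 V →
        (∀ j ∈ Finset.Icc 1 4, ∀ x ∈ Set.Icc (0:ℝ) 1, |iteratedDeriv j V x| ≤ B) →
        ∀ (n : ℕ), 3 ≤ n →
          fdH1 n = (fdD1 n)ᴴ * fdD1 n ∧
          ∀ v : Fin n → ℂ,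
            evnorm ((matComm (fdH1 n) (fdH2 n V)).mulVec v) ≤
              C1 * (evnorm ((fdD1 n).mulVec v) + evnorm v) ∧
            evnorm ((matComm (fdH1 n) (matComm (fdH1 n) (fdH2 n V))).mulVec v) ≤
              C2 * (evnorm ((fdH1 n).mulVec v) + evnorm v) := by
  refine ⟨2*B+1, by linarith, 6*B+1, by linarith, ?_⟩
  intro V hper hC hb n hn
  haveI : NeZero n := ⟨by omega⟩
  obtain ⟨bd1, bd2, bd3, bd4⟩ := coeff_bounds hper hC hb hn
  refine ⟨fdH1_eq_conjTranspose_mul hn, ?_⟩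
  intro v
  have hQ2 : ∀ (u : Fin n → ℂ) (j : Fin n),
      (fdH2 n V).mulVec u j = ((Qg V n ((j:ℕ):ℤ) : ℝ) : ℂ) * u j := by
    intro u j
    rw [mulVec_fdH2 hn]
    norm_num [Qg]
  -- Identity 1
  have hID1 : ∀ (u : Fin n → ℂ) (k : Fin n), (matComm (fdH1 n) (fdH2 n V)).mulVec u k
      = ((ag V n ((k:ℕ):ℤ) : ℝ):ℂ) * ((fdD1 n).mulVec u (k+1))
        + ((ag V n (((k:ℕ):ℤ)-1) : ℝ):ℂ) * ((fdD1 n).mulVec u k)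
        - ((bg V n ((k:ℕ):ℤ) : ℝ):ℂ) * u k := by
    intro u k
    rw [matComm, Matrix.sub_mulVec, ← Matrix.mulVec_mulVec, ← Matrix.mulVec_mulVec, Pi.sub_apply]
    simp only [mulVec_fdH1 hn, hQ2, mulVec_fdD1 hn, Qg_val_add hper hn, Qg_val_sub hper hn]
    simp only [add_sub_cancel_right, sub_add_cancel]
    unfold ag bg
    push_cast
    ring_nf
  -- Identity 2
  have hID2 : ∀ k : Fin n, (matComm (fdH1 n) (matComm (fdH1 n) (fdH2 n V))).mulVec v k
      = ((-(bg V n (((k:ℕ):ℤ)+1)) : ℝ):ℂ) * ((fdH1 n).mulVec v (k+1))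
        + ((-(bg V n (((k:ℕ):ℤ)-1)) : ℝ):ℂ) * ((fdH1 n).mulVec v (k-1))
        + ((-(2*bg V n (((k:ℕ):ℤ)+1)) : ℝ):ℂ) * ((fdH1 n).mulVec v k)
        + (((2*(n:ℝ)*(bg V n (((k:ℕ):ℤ)-1) - bg V n (((k:ℕ):ℤ)+1))) : ℝ):ℂ) * ((fdD1 n).mulVec v k)
        + ((((n:ℝ)^2*(bg V n (((k:ℕ):ℤ)+1) - 2*bg V n ((k:ℕ):ℤ) + bg V n (((k:ℕ):ℤ)-1))) : ℝ):ℂ) * v k := by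
    intro k
    rw [show matComm (fdH1 n) (matComm (fdH1 n) (fdH2 n V))
        = fdH1 n * (matComm (fdH1 n) (fdH2 n V)) - (matComm (fdH1 n) (fdH2 n V)) * fdH1 n from rfl]
    rw [Matrix.sub_mulVec, ← Matrix.mulVec_mulVec, ← Matrix.mulVec_mulVec, Pi.sub_apply]
    simp only [mulVec_fdH1 hn]
    simp only [hID1]
    simp only [ag_val_add hper hn, ag_val_sub hper hn, ag_val_add_pred hper hn,
      ag_val_sub_pred hper hn, bg_val_add hper hn, bg_val_sub hper hn]
    simp only [mulVec_fdH1 hn, mulVec_fdD1 hn]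
    simp only [add_sub_cancel_right, sub_add_cancel]
    unfold ag bg
    push_cast
    ring_nf
  constructor
  · -- first commutator bound
    have e : (matComm (fdH1 n) (fdH2 n V)).mulVec v = fun k : Fin n =>
        ((ag V n ((k:ℕ):ℤ) : ℝ):ℂ) * ((fdD1 n).mulVec v (k+1))
        + (((ag V n (((k:ℕ):ℤ)-1)) : ℝ):ℂ) * ((fdD1 n).mulVec v k)
        + (((-bg V n ((k:ℕ):ℤ)) : ℝ):ℂ) * v k := by
      funext k
      rw [hID1 v k]
      push_cast
      ring
    rw [e]
    have t1 : evnorm (fun k : Fin n => ((ag V n ((k:ℕ):ℤ) : ℝ):ℂ) * ((fdD1 n).mulVec v (k+1)))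
        ≤ B * evnorm ((fdD1 n).mulVec v) := by
      calc _ ≤ B * evnorm (fun k : Fin n => (fdD1 n).mulVec v (k+1)) :=
            evnorm_smul_le hB (fun k => bd1 _) _
      _ = B * evnorm ((fdD1 n).mulVec v) := by rw [evnorm_shift]
    have t2 : evnorm (fun k : Fin n => (((ag V n (((k:ℕ):ℤ)-1)) : ℝ):ℂ) * ((fdD1 n).mulVec v k))
        ≤ B * evnorm ((fdD1 n).mulVec v) := evnorm_smul_le hB (fun k => bd1 _) _
    have t3 : evnorm (fun k : Fin n => (((-bg V n ((k:ℕ):ℤ)) : ℝ):ℂ) * v k) ≤ B * evnorm v :=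
      evnorm_smul_le hB (fun k => by rw [abs_neg]; exact bd2 _) _
    have tri := evnorm_add3_le
      (fun k : Fin n => ((ag V n ((k:ℕ):ℤ) : ℝ):ℂ) * ((fdD1 n).mulVec v (k+1)))
      (fun k : Fin n => (((ag V n (((k:ℕ):ℤ)-1)) : ℝ):ℂ) * ((fdD1 n).mulVec v k))
      (fun k : Fin n => (((-bg V n ((k:ℕ):ℤ)) : ℝ):ℂ) * v k)
    have h1 := evnorm_nonneg v
    have h2 := evnorm_nonneg ((fdD1 n).mulVec v)
    calc _ ≤ _ := tri
    _ ≤ (2*B+1) * (evnorm ((fdD1 n).mulVec v) + evnorm v) := by nlinarith [mul_nonneg hB h1, mul_nonneg hB h2]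
  · -- second commutator bound
    have e : (matComm (fdH1 n) (matComm (fdH1 n) (fdH2 n V))).mulVec v = fun k : Fin n =>
        ((-(bg V n (((k:ℕ):ℤ)+1)) : ℝ):ℂ) * ((fdH1 n).mulVec v (k+1))
        + ((-(bg V n (((k:ℕ):ℤ)-1)) : ℝ):ℂ) * ((fdH1 n).mulVec v (k-1))
        + ((-(2*bg V n (((k:ℕ):ℤ)+1)) : ℝ):ℂ) * ((fdH1 n).mulVec v k)
        + (((2*(n:ℝ)*(bg V n (((k:ℕ):ℤ)-1) - bg V n (((k:ℕ):ℤ)+1))) : ℝ):ℂ) * ((fdD1 n).mulVec v k)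
        + ((((n:ℝ)^2*(bg V n (((k:ℕ):ℤ)+1) - 2*bg V n ((k:ℕ):ℤ) + bg V n (((k:ℕ):ℤ)-1))) : ℝ):ℂ) * v k :=
      funext (fun k => hID2 k)
    rw [e]
    have t1 : evnorm (fun k : Fin n => ((-(bg V n (((k:ℕ):ℤ)+1)) : ℝ):ℂ) * ((fdH1 n).mulVec v (k+1)))
        ≤ B * evnorm ((fdH1 n).mulVec v) := by
      calc _ ≤ B * evnorm (fun k : Fin n => (fdH1 n).mulVec v (k+1)) :=
            evnorm_smul_le hB (fun k => by rw [abs_neg]; exact bd2 _) _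
      _ = B * evnorm ((fdH1 n).mulVec v) := by rw [evnorm_shift]
    have t2 : evnorm (fun k : Fin n => ((-(bg V n (((k:ℕ):ℤ)-1)) : ℝ):ℂ) * ((fdH1 n).mulVec v (k-1)))
        ≤ B * evnorm ((fdH1 n).mulVec v) := by
      calc _ ≤ B * evnorm (fun k : Fin n => (fdH1 n).mulVec v (k-1)) :=
            evnorm_smul_le hB (fun k => by rw [abs_neg]; exact bd2 _) _
      _ = B * evnorm ((fdH1 n).mulVec v) := by rw [evnorm_shift_sub]
    have t3 : evnorm (fun k : Fin n => ((-(2*bg V n (((k:ℕ):ℤ)+1)) : ℝ):ℂ) * ((fdH1 n).mulVec v k))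
        ≤ (2*B) * evnorm ((fdH1 n).mulVec v) := by
      apply evnorm_smul_le (by linarith)
      intro k
      rw [abs_neg, abs_mul, abs_two]
      have := bd2 (((k:ℕ):ℤ)+1)
      linarith
    have t4 : evnorm (fun k : Fin n =>
          (((2*(n:ℝ)*(bg V n (((k:ℕ):ℤ)-1) - bg V n (((k:ℕ):ℤ)+1))) : ℝ):ℂ) * ((fdD1 n).mulVec v k))
        ≤ (4*B) * ((evnorm ((fdH1 n).mulVec v) + evnorm v) / 2) := by
      calc _ ≤ (4*B) * evnorm ((fdD1 n).mulVec v) :=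
            evnorm_smul_le (by linarith) (fun k => bd3 _) _
      _ ≤ (4*B) * ((evnorm ((fdH1 n).mulVec v) + evnorm v) / 2) :=
            mul_le_mul_of_nonneg_left (evnorm_D1_le hn v) (by linarith)
    have t5 : evnorm (fun k : Fin n =>
          ((((n:ℝ)^2*(bg V n (((k:ℕ):ℤ)+1) - 2*bg V n ((k:ℕ):ℤ) + bg V n (((k:ℕ):ℤ)-1))) : ℝ):ℂ) * v k)
        ≤ B * evnorm v := evnorm_smul_le hB (fun k => bd4 _) _
    have tri := evnorm_add5_le
      (fun k : Fin n => ((-(bg V n (((k:ℕ):ℤ)+1)) : ℝ):ℂ) * ((fdH1 n).mulVec v (k+1)))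
      (fun k : Fin n => ((-(bg V n (((k:ℕ):ℤ)-1)) : ℝ):ℂ) * ((fdH1 n).mulVec v (k-1)))
      (fun k : Fin n => ((-(2*bg V n (((k:ℕ):ℤ)+1)) : ℝ):ℂ) * ((fdH1 n).mulVec v k))
      (fun k : Fin n =>
        (((2*(n:ℝ)*(bg V n (((k:ℕ):ℤ)-1) - bg V n (((k:ℕ):ℤ)+1))) : ℝ):ℂ) * ((fdD1 n).mulVec v k))
      (fun k : Fin n =>
        ((((n:ℝ)^2*(bg V n (((k:ℕ):ℤ)+1) - 2*bg V n ((k:ℕ):ℤ) + bg V n (((k:ℕ):ℤ)-1))) : ℝ):ℂ) * v k)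
    have h1 := evnorm_nonneg v
    have h2 := evnorm_nonneg ((fdH1 n).mulVec v)
    calc _ ≤ _ := tri
    _ ≤ (6*B+1) * (evnorm ((fdH1 n).mulVec v) + evnorm v) := by nlinarith [mul_nonneg hB h1, mul_nonneg hB h2]
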